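/- Let φ_i : L → L' and ψ_i : L'' → L be simplicial maps (i = 1,…,m) with ψ_i ∼ ψ_{i+1} for all i. Then SD(φ₁∘ψ₁,…,φ_m∘ψ_m) ≤ SD(φ₁,…,φ_m). -/

import Mathlib

noncomputable section

/-- An abstract simplicial complex on a vertex type `V`. -/
structure ASC (V : Type) where
  faces : Set (Finset V)
  nonempty_of_mem : ∀ ⦃σ⦄, σ ∈ faces → σ.Nonempty
  down_closed : ∀ ⦃σ⦄, σ ∈ faces → ∀ ⦃τ⦄, τ ⊆ σ → τ.Nonempty → τ ∈ faces

/-- A simplicial map between abstract simplicial complexes. -/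
structure SMap {V W : Type} [DecidableEq W] (K : ASC V) (L : ASC W) where
  toFun : V → W
  map_faces : ∀ ⦃σ⦄, σ ∈ K.faces → σ.image toFun ∈ L.faces

/-- The identity simplicial map. -/
def SMap.id {V : Type} [DecidableEq V] (K : ASC V) : SMap K K :=
  ⟨fun v => v, fun σ hσ => by simpa using hσ⟩

/-- Composition of simplicial maps. -/
def SMap.comp {U V W : Type} [DecidableEq V] [DecidableEq W]
    {K : ASC U} {L : ASC V} {M : ASC W}
    (g : SMap L M) (f : SMap K L) : SMap K M :=
  ⟨g.toFun ∘ f.toFun, fun σ hσ => by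
    rw [show σ.image (g.toFun ∘ f.toFun) = (σ.image f.toFun).image g.toFun by
      simp [Finset.image_image]]
    exact g.map_faces (f.map_faces hσ)⟩

/-- Two simplicial maps are contiguous if the union of the images of every
simplex is a simplex of the codomain. -/
def Contiguous {V W : Type} [DecidableEq W] {K : ASC V} {L : ASC W}
    (f g : SMap K L) : Prop :=
  ∀ ⦃σ⦄, σ ∈ K.faces → σ.image f.toFun ∪ σ.image g.toFun ∈ L.faces

/-- Two simplicial maps are in the same contiguity class if they are joined by
a finite chain of pairwise contiguous simplicial maps. -/
def ContigClass {V W : Type} [DecidableEq W] {K : ASC V} {L : ASC W}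
    (f g : SMap K L) : Prop :=
  Relation.ReflTransGen Contiguous f g

/-- `N` is a subcomplex of `K`. -/
def IsSubcomplex {V : Type} (N K : ASC V) : Prop :=
  N.faces ⊆ K.faces

/-- Restriction of a simplicial map to a subcomplex. -/
def SMap.restrict {V W : Type} [DecidableEq W] {N K : ASC V} {L : ASC W}
    (h : IsSubcomplex N K) (f : SMap K L) : SMap N L :=
  ⟨f.toFun, fun _ hσ => f.map_faces (h hσ)⟩

/-- `SDcover φ n` : the domain is covered by `n+1` subcomplexes on each of which
all restrictions of the maps `φ i` are pairwise in the same contiguity class. -/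
def SDcover {V W : Type} [DecidableEq W] {K : ASC V} {L : ASC W} {m : ℕ}
    (φ : Fin m → SMap K L) (n : ℕ) : Prop :=
  ∃ (Ls : Fin (n + 1) → ASC V) (h : ∀ k, IsSubcomplex (Ls k) K),
    (∀ σ ∈ K.faces, ∃ k, σ ∈ (Ls k).faces) ∧
    ∀ k i j, ContigClass (SMap.restrict (h k) (φ i)) (SMap.restrict (h k) (φ j))

/-- The higher contiguity distance `SD(φ₁, …, φ_m)` as a value in `ℕ∞`. -/
def SD {V W : Type} [DecidableEq W] {K : ASC V} {L : ASC W} {m : ℕ}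
    (φ : Fin m → SMap K L) : ℕ∞ :=
  sInf {N : ℕ∞ | ∃ n : ℕ, N = n ∧ SDcover φ n}

/-- The `n`-fold categorical power of a simplicial complex. -/
def ASC.pow {V : Type} [DecidableEq V] (K : ASC V) (n : ℕ) : ASC (Fin n → V) where
  faces := {σ | σ.Nonempty ∧ ∀ i, σ.image (fun v => v i) ∈ K.faces}
  nonempty_of_mem := fun _ hσ => hσ.1
  down_closed := fun σ hσ τ hτσ hτ =>
    ⟨hτ, fun i => K.down_closed (hσ.2 i)
      (Finset.image_subset_image (f := fun v => v i) hτσ) (hτ.image _)⟩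

/-- The `i`-th projection from the `n`-fold categorical power. -/
def ASC.proj {V : Type} [DecidableEq V] (K : ASC V) (n : ℕ) (i : Fin n) :
    SMap (K.pow n) K :=
  ⟨fun v => v i, fun _ hσ => hσ.2 i⟩

/-- The power of a simplicial map. -/
def SMap.pow {V W : Type} [DecidableEq V] [DecidableEq W] {K : ASC V} {L : ASC W}
    (f : SMap K L) (n : ℕ) : SMap (K.pow n) (L.pow n) :=
  ⟨fun v i => f.toFun (v i), fun σ hσ => by
    obtain ⟨h1, h2⟩ := hσ
    refine ⟨h1.image _, fun i => ?_⟩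
    have hf := f.map_faces (h2 i)
    rw [Finset.image_image] at hf ⊢
    exact hf⟩

/-- The higher discrete topological complexity `TC_n(K)`. -/
def TCn {V : Type} [DecidableEq V] (K : ASC V) (n : ℕ) : ℕ∞ :=
  SD (fun i : Fin n => K.proj n i)

/-- The higher discrete topological complexity of a simplicial map. -/
def TCnMap {V W : Type} [DecidableEq V] [DecidableEq W] {K : ASC V} {L : ASC W}
    (φ : SMap K L) (n : ℕ) : ℕ∞ :=
  SD (fun i : Fin n => φ.comp (K.proj n i))

/-- The binary categorical product of two simplicial complexes. -/
def ASC.prod {V W : Type} [DecidableEq V] [DecidableEq W]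
    (K : ASC V) (L : ASC W) : ASC (V × W) where
  faces := {σ | σ.Nonempty ∧ σ.image Prod.fst ∈ K.faces ∧ σ.image Prod.snd ∈ L.faces}
  nonempty_of_mem := fun _ hσ => hσ.1
  down_closed := fun σ hσ τ hτσ hτ =>
    ⟨hτ, K.down_closed hσ.2.1 (Finset.image_subset_image hτσ) (hτ.image _),
      L.down_closed hσ.2.2 (Finset.image_subset_image hτσ) (hτ.image _)⟩

/-- The path complex `I_m` : vertices `0, …, m`, maximal simplices `{i, i+1}`. -/
def pathComplex (m : ℕ) : ASC (Fin (m + 1)) where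
  faces := {σ | σ.Nonempty ∧ ∃ i : ℕ, ∀ j ∈ σ, (j : ℕ) = i ∨ (j : ℕ) = i + 1}
  nonempty_of_mem := fun _ hσ => hσ.1
  down_closed := fun _ hσ _ hτσ hτ =>
    ⟨hτ, hσ.2.imp fun _ h => fun j hj => h j (hτσ hj)⟩

/-- Two simplicial complexes have the same strong homotopy type. -/
def StrongHomotopyType {V W : Type} [DecidableEq V] [DecidableEq W]
    (K : ASC V) (L : ASC W) : Prop :=
  ∃ (f : SMap K L) (g : SMap L K),
    ContigClass (g.comp f) (SMap.id K) ∧ ContigClass (f.comp g) (SMap.id L)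

/-- The one-point simplicial complex. -/
def ptASC : ASC Unit where
  faces := {σ | σ.Nonempty}
  nonempty_of_mem := fun _ hσ => hσ
  down_closed := fun _ _ _ _ hτ => hτ

/-- A simplicial complex is strongly collapsible if it has the strong homotopy
type of a point. -/
def StronglyCollapsible {V : Type} [DecidableEq V] (K : ASC V) : Prop :=
  StrongHomotopyType K ptASC

/-- The inclusion `N → N × I_m` at level `0`. -/
def inclZero {V : Type} [DecidableEq V] (N : ASC V) (m : ℕ) :
    SMap N (N.prod (pathComplex m)) :=
  ⟨fun v => (v, 0), fun σ hσ => by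
    refine ⟨(N.nonempty_of_mem hσ).image _, ?_, ?_⟩
    · rw [Finset.image_image, show (Prod.fst ∘ fun v : V => (v, (0 : Fin (m + 1))))
        = fun v => v from rfl, Finset.image_id']
      exact hσ
    · rw [Finset.image_image]
      refine ⟨(N.nonempty_of_mem hσ).image _, 0, fun j hj => ?_⟩
      simp only [Finset.mem_image, Function.comp] at hj
      obtain ⟨v, -, rfl⟩ := hj
      simp⟩

/-- A simplicial finite-fibration : the homotopy lifting property with respect
to simplicial homotopies `N × I_m → L'` with `N` finite. -/
def IsFiniteFibration {V W : Type} [DecidableEq V] [DecidableEq W]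
    {K : ASC V} {L : ASC W} (φ : SMap K L) : Prop :=
  ∀ (U : Type) [Fintype U] [DecidableEq U] (N : ASC U) (m : ℕ) (g : SMap N K)
    (G : SMap (N.prod (pathComplex m)) L),
    (∀ v, G.toFun (v, 0) = φ.toFun (g.toFun v)) →
    ∃ Gt : SMap (N.prod (pathComplex m)) K,
      (∀ v, Gt.toFun (v, 0) = g.toFun v) ∧ (∀ x, φ.toFun (Gt.toFun x) = G.toFun x)

/-- The constant simplicial map at a vertex `v₀` of `L`. -/
def constMap {V W : Type} [DecidableEq W] (K : ASC V) {L : ASC W} {v₀ : W}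
    (hv₀ : {v₀} ∈ L.faces) : SMap K L :=
  ⟨fun _ => v₀, fun σ hσ => by
    have hsub : σ.image (fun _ => v₀) ⊆ {v₀} := by
      intro x hx
      simp only [Finset.mem_image] at hx
      obtain ⟨v, -, rfl⟩ := hx
      simp
    exact L.down_closed hv₀ hsub ((K.nonempty_of_mem hσ).image _)⟩

/-- A simplicial map is a strong equivalence if it admits an inverse up to
contiguity class. -/
def IsStrongEquiv {V W : Type} [DecidableEq V] [DecidableEq W]
    {K : ASC V} {L : ASC W} (f : SMap K L) : Prop :=
  ∃ g : SMap L K,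
    ContigClass (g.comp f) (SMap.id K) ∧ ContigClass (f.comp g) (SMap.id L)

theorem SMap.ext' {V W : Type} [DecidableEq W] {K : ASC V} {L : ASC W}
    {f g : SMap K L} (h : f.toFun = g.toFun) : f = g := by
  cases f; cases g; simpa using h

theorem Contiguous.symm' {V W : Type} [DecidableEq W] {K : ASC V} {L : ASC W}
    {f g : SMap K L} (h : Contiguous f g) : Contiguous g f := by
  intro σ hσ; rw [Finset.union_comm]; exact h hσ

theorem ContigClass.symm' {V W : Type} [DecidableEq W] {K : ASC V} {L : ASC W}
    {f g : SMap K L} (h : ContigClass f g) : ContigClass g f :=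
  by
  induction h with
  | refl => exact Relation.ReflTransGen.refl
  | tail _ hc ih => exact Relation.ReflTransGen.head hc.symm' ih

theorem ContigClass.comp_left' {U V W : Type} [DecidableEq V] [DecidableEq W]
    {K : ASC U} {M : ASC V} {N : ASC W} (φ : SMap M N) {f g : SMap K M}
    (h : ContigClass f g) : ContigClass (φ.comp f) (φ.comp g) := by
  induction h with
  | refl => exact Relation.ReflTransGen.refl
  | tail _ hc ih =>
      refine ih.tail ?_
      intro σ hσ
      have := φ.map_faces (hc hσ)
      simpa [SMap.comp, Finset.image_union, Finset.image_image, Function.comp] using this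

theorem ContigClass.comp_right' {U V W : Type} [DecidableEq V] [DecidableEq W]
    {K : ASC U} {M : ASC V} {N : ASC W} {f g : SMap M N} (ψ : SMap K M)
    (h : ContigClass f g) : ContigClass (f.comp ψ) (g.comp ψ) := by
  induction h with
  | refl => exact Relation.ReflTransGen.refl
  | tail _ hc ih =>
      refine ih.tail ?_
      intro σ hσ
      have := hc (ψ.map_faces hσ)
      simpa [SMap.comp, Finset.image_image, Function.comp] using this

theorem ContigClass.restrict' {V W : Type} [DecidableEq W] {N K : ASC V} {L : ASC W}
    (hsub : IsSubcomplex N K) {f g : SMap K L}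
    (h : ContigClass f g) :
    ContigClass (SMap.restrict hsub f) (SMap.restrict hsub g) := by
  induction h with
  | refl => exact Relation.ReflTransGen.refl
  | tail _ hc ih => exact ih.tail fun σ hσ => hc (hsub hσ)

/-- `SD(φ₁∘ψ₁,…,φ_m∘ψ_m) ≤ SD(φ₁,…,φ_m)` when the `ψ_i` form a
chain of maps in the same contiguity class. -/
theorem SD_precomp_le
    {U V W : Type} [DecidableEq U] [DecidableEq W]
    {L : ASC U} {L' : ASC W} {L'' : ASC V} {m : ℕ}
    (phi : Fin m → SMap L L') (psi : Fin m → SMap L'' L)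
    (hchain : ∀ (i : ℕ) (h : i + 1 < m),
      ContigClass (psi ⟨i, Nat.lt_of_succ_lt h⟩) (psi ⟨i + 1, h⟩)) :
    SD (fun i => (phi i).comp (psi i)) ≤ SD phi := by
  refine sInf_le_sInf ?_
  rintro N ⟨n, rfl, Ls, hLs, hcov, hcontig⟩
  refine ⟨n, rfl, ?_⟩
  -- preimage subcomplexes
  classical
  have hm : ∀ i : Fin m, ContigClass (psi ⟨0, i.pos⟩) (psi i) := by
    rintro ⟨i, hi⟩
    induction i with
    | zero => exact Relation.ReflTransGen.refl
    | succ i ih => exact (ih (Nat.lt_of_succ_lt hi)).trans (hchain i hi)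
  by_cases hm0 : m = 0
  · subst hm0
    refine ⟨fun _ => L'', fun _ => fun _ h => h, fun σ hσ => ⟨0, hσ⟩, fun k i j => i.elim0⟩
  have h0 : 0 < m := Nat.pos_of_ne_zero hm0
  set psi0 : SMap L'' L := psi ⟨0, h0⟩ with hpsi0
  let Ms : Fin (n + 1) → ASC V := fun k =>
    ⟨{σ | σ ∈ L''.faces ∧ σ.image psi0.toFun ∈ (Ls k).faces},
      fun σ hσ => L''.nonempty_of_mem hσ.1,
      fun σ hσ τ hτσ hτ => ⟨L''.down_closed hσ.1 hτσ hτ,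
        (Ls k).down_closed hσ.2 (Finset.image_subset_image hτσ) (hτ.image _)⟩⟩
  refine ⟨Ms, fun k => fun σ hσ => hσ.1, ?_, ?_⟩
  · intro σ hσ
    obtain ⟨k, hk⟩ := hcov (σ.image psi0.toFun) (psi0.map_faces hσ)
    exact ⟨k, hσ, hk⟩
  · intro k i j
    have hMsub : IsSubcomplex (Ms k) L'' := fun σ hσ => hσ.1
    -- psi0 as map into Ls k
    set psibar : SMap (Ms k) (Ls k) :=
      ⟨psi0.toFun, fun σ (hσ : σ ∈ (Ms k).faces) => hσ.2⟩ with hpsibar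
    have key : ∀ a : Fin m,
        ContigClass (SMap.restrict hMsub ((phi a).comp (psi a)))
          ((SMap.restrict (hLs k) (phi a)).comp psibar) := by
      intro a
      have h1 : ContigClass (SMap.restrict hMsub (psi a)) (SMap.restrict hMsub psi0) :=
        (ContigClass.restrict' hMsub (hm a)).symm'
      have h2 := ContigClass.comp_left' (phi a) h1
      have e1 : SMap.restrict hMsub ((phi a).comp (psi a))
          = (phi a).comp (SMap.restrict hMsub (psi a)) := SMap.ext' rfl
      have e2 : (phi a).comp (SMap.restrict hMsub psi0)
          = (SMap.restrict (hLs k) (phi a)).comp psibar := SMap.ext' rfl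
      rw [e1, ← e2]
      exact h2
    have hmid := ContigClass.comp_right' psibar (hcontig k i j)
    exact ((key i).trans hmid).trans (key j).symm'
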